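/- Let A ∈ {0,1}^{m×n} be a binary matrix, b ∈ ℕ₊^m a vector of positive integers, W ≥ 1 with W ≤ b_i for all i ∈ [m], and λ > 1. Let S ⊆ [n], ℓ ∈ [n]∖S, set w_i = λ^{(Σ_{j∈S} A_{ij})/b_i} − 1 and w'_i = λ^{(Σ_{j∈S∪{ℓ}} A_{ij})/b_i} − 1. If Σ_{i=1}^m A_{iℓ} w_i < λ − 1 and Σ_{i=1}^m A_{iℓ} ≤ k, then Σ_{i=1}^m b_i (w'_i − w_i) < W·λ^{1/W}·(k + λ − 1). -/

import Mathlib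

lemma exp_aux_stmt9 {a c : ℝ} (ha : 0 < a) (hac : a ≤ c) :
    Real.exp a - 1 ≤ (a / c) * (Real.exp c - 1) := by
  have hc : 0 < c := lt_of_lt_of_le ha hac
  set t := a / c with ht
  have ht0 : 0 ≤ t := div_nonneg ha.le hc.le
  have ht1 : t ≤ 1 := (div_le_one hc).2 hac
  have key := convexOn_exp.2 (Set.mem_univ (0:ℝ)) (Set.mem_univ c)
    (by linarith : (0:ℝ) ≤ 1 - t) ht0 (by ring)
  have htb : t * c = a := div_mul_cancel₀ a hc.ne'
  simp only [smul_eq_mul, mul_zero, zero_add, Real.exp_zero, mul_one] at key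
  rw [htb] at key
  have : t * (Real.exp c - 1) = t * Real.exp c - t := by ring
  linarith

/-- Single-step weight-increase bound in the binary
`k`-column-sparse setting: if `w_i = λ^{(Σ_{j∈S} A_{ij})/b_i} − 1` and
`w'_i = λ^{(Σ_{j∈S∪{ℓ}} A_{ij})/b_i} − 1`, `Σ_i A_{iℓ} w_i < λ − 1`, and
`Σ_i A_{iℓ} ≤ k`, then `Σ_i b_i (w'_i − w_i) < W·λ^{1/W}·(k + λ − 1)`. -/
theorem stmt_9 (m n : ℕ)
    (A : Fin m → Fin n → ℝ) (hA : ∀ i j, A i j = 0 ∨ A i j = 1)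
    (b : Fin m → ℕ) (hb : ∀ i, 1 ≤ b i)
    (W : ℝ) (hW : 1 ≤ W) (hwidth : ∀ i, W ≤ (b i : ℝ))
    (lam : ℝ) (hlam : 1 < lam)
    (k : ℝ)
    (S : Finset (Fin n)) (ℓ : Fin n) (hℓ : ℓ ∉ S)
    (w w' : Fin m → ℝ)
    (hw : ∀ i, w i = lam ^ ((∑ j ∈ S, A i j) / (b i : ℝ)) - 1)
    (hw' : ∀ i, w' i = lam ^ ((∑ j ∈ insert ℓ S, A i j) / (b i : ℝ)) - 1)
    (hsel : ∑ i, A i ℓ * w i < lam - 1)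
    (hcol : ∑ i, A i ℓ ≤ k) :
    ∑ i, (b i : ℝ) * (w' i - w i) < W * lam ^ (1 / W) * (k + lam - 1) := by
  have hlam0 : (0:ℝ) < lam := by linarith
  have hW0 : (0:ℝ) < W := by linarith
  have hlog : 0 < Real.log lam := Real.log_pos hlam
  set C := W * lam ^ (1 / W) with hC
  have hC0 : 0 < C := mul_pos hW0 (Real.rpow_pos_of_pos hlam0 _)
  have hpt : ∀ i, (b i : ℝ) * (w' i - w i) ≤ A i ℓ * (w i + 1) * C := by
    intro i
    have hbi : (1:ℝ) ≤ (b i : ℝ) := by exact_mod_cast hb i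
    have hbi0 : (0:ℝ) < (b i : ℝ) := by linarith
    have hsum : ∑ j ∈ insert ℓ S, A i j = A i ℓ + ∑ j ∈ S, A i j :=
      Finset.sum_insert hℓ
    rcases hA i ℓ with h0 | h1
    · have heq : w' i = w i := by rw [hw', hw, hsum, h0, zero_add]
      rw [heq, h0]
      simp
    · have hws : w i + 1 = lam ^ ((∑ j ∈ S, A i j) / (b i : ℝ)) := by
        rw [hw]; ring
      have hwpos : 0 < w i + 1 := hws ▸ Real.rpow_pos_of_pos hlam0 _
      have hdiff : w' i - w i =
          (w i + 1) * (lam ^ ((1:ℝ)/(b i : ℝ)) - 1) := by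
        rw [hw', hw, hsum, h1]
        rw [show (1 + ∑ j ∈ S, A i j) / (b i : ℝ)
            = (∑ j ∈ S, A i j) / (b i : ℝ) + 1 / (b i : ℝ) by ring]
        rw [Real.rpow_add hlam0]
        ring
      have hkey : (b i : ℝ) * (lam ^ ((1:ℝ)/(b i : ℝ)) - 1) ≤ C := by
        have ha : 0 < Real.log lam / (b i : ℝ) := div_pos hlog hbi0
        have hac : Real.log lam / (b i : ℝ) ≤ Real.log lam / W := by
          gcongr
          exact hwidth i
        have h1' := exp_aux_stmt9 ha hac
        have hrpb : lam ^ ((1:ℝ)/(b i : ℝ)) = Real.exp (Real.log lam / (b i : ℝ)) := by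
          rw [Real.rpow_def_of_pos hlam0]; ring_nf
        have hrpW : lam ^ ((1:ℝ)/W) = Real.exp (Real.log lam / W) := by
          rw [Real.rpow_def_of_pos hlam0]; ring_nf
        have hfrac : (Real.log lam / (b i : ℝ)) / (Real.log lam / W) = W / (b i : ℝ) := by
          rw [div_div_div_comm, div_self hlog.ne', one_div, inv_div]
        rw [hfrac] at h1'
        have hexpW : 0 < Real.exp (Real.log lam / W) := Real.exp_pos _
        have : (b i : ℝ) * (lam ^ ((1:ℝ)/(b i : ℝ)) - 1)
            ≤ (b i : ℝ) * ((W / (b i : ℝ)) * (Real.exp (Real.log lam / W) - 1)) := by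
          rw [hrpb]
          exact mul_le_mul_of_nonneg_left h1' hbi0.le
        have heq2 : (b i : ℝ) * ((W / (b i : ℝ)) * (Real.exp (Real.log lam / W) - 1))
            = W * (Real.exp (Real.log lam / W) - 1) := by
          field_simp
        rw [heq2] at this
        calc (b i : ℝ) * (lam ^ ((1:ℝ)/(b i : ℝ)) - 1)
            ≤ W * (Real.exp (Real.log lam / W) - 1) := this
          _ ≤ W * Real.exp (Real.log lam / W) := by nlinarith
          _ = C := by rw [hC, hrpW]
      have hrw : (b i : ℝ) * (w' i - w i)
          = (w i + 1) * ((b i : ℝ) * (lam ^ ((1:ℝ)/(b i : ℝ)) - 1)) := by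
        rw [hdiff]; ring
      rw [hrw, h1, one_mul]
      exact mul_le_mul_of_nonneg_left hkey hwpos.le
  calc ∑ i, (b i : ℝ) * (w' i - w i)
      ≤ ∑ i, A i ℓ * (w i + 1) * C := Finset.sum_le_sum fun i _ => hpt i
    _ = (∑ i, (A i ℓ * w i + A i ℓ)) * C := by
        rw [← Finset.sum_mul]
        congr 1
        exact Finset.sum_congr rfl fun i _ => by ring
    _ = ((∑ i, A i ℓ * w i) + ∑ i, A i ℓ) * C := by rw [Finset.sum_add_distrib]
    _ < ((lam - 1) + k) * C := by
        apply mul_lt_mul_of_pos_right _ hC0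
        linarith
    _ = W * lam ^ (1 / W) * (k + lam - 1) := by rw [hC]; ring
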